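/- Almost-martingale property of the mean potential in the mixed regime: Let N ∈ ℕ with N ≥ 1, μ ∈ (0,1), w > 0, γ = w/(1−μ) with γ ≥ 1, and let u ∈ ℝ^N satisfy 0 ≤ u(i) ≤ 1 for all i. Set ū = (1/N) Σ_{i=1}^N u(i) and define the one-step expected mean potential E := Σ_{i=1}^{N} (u(i)/N) · ( (1/N) Σ_{j=1}^N Δ^i(u)(j) ) + (1 − ū) · μ ū, where (u(i)/N) = φ(u(i))/N is the probability that component i fires and 1 − ū is the probability that no component fires. Then | E − (μ + w) ū | ≤ γ/N. -/

import Mathlib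

/-- The firing map `Δ^{i}` : after component `i` fires, its potential resets to
`0` and every other component `j` gets potential `μ * u j + w`. -/
def fireMap (N : ℕ) (μ w : ℝ) (i : Fin N) (u : Fin N → ℝ) : Fin N → ℝ :=
  fun j => if j = i then 0 else μ * u j + w

/-- Almost-martingale property of the mean potential in the mixed
regime.  Let `γ = w/(1−μ) ≥ 1` and let `u ∈ ℝ^N` with `0 ≤ u i ≤ 1` for all
`i`.  With `ū = (1/N) Σ_i u i` and the one-step expected mean potential
`E = Σ_i (u i / N) ((1/N) Σ_j Δ^i(u)(j)) + (1 − ū) μ ū`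
(component `i` fires with probability `φ(u i)/N = u i / N` and no component
fires with probability `1 − ū`), one has `|E − (μ + w) ū| ≤ γ/N`. -/
theorem mean_potential_almost_martingale (N : ℕ) (hN : 1 ≤ N) (μ w : ℝ)
    (hμ0 : 0 < μ) (hμ1 : μ < 1) (hw : 0 < w)
    (hγ : 1 ≤ w / (1 - μ))
    (u : Fin N → ℝ) (hu : ∀ i, 0 ≤ u i ∧ u i ≤ 1)
    (ubar E : ℝ)
    (hubar : ubar = (1 / (N : ℝ)) * ∑ i, u i)
    (hE : E = (∑ i, (u i / (N : ℝ)) * ((1 / (N : ℝ)) * ∑ j, fireMap N μ w i u j))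
        + (1 - ubar) * (μ * ubar)) :
    |E - (μ + w) * ubar| ≤ (w / (1 - μ)) / (N : ℝ) := by
  have hN0 : (0:ℝ) < N := by exact_mod_cast Nat.lt_of_lt_of_le Nat.zero_lt_one hN
  have hN' : (N:ℝ) ≠ 0 := ne_of_gt hN0
  set S := ∑ i, u i with hS
  set T := ∑ i, u i * u i with hT
  have hsum : ∀ i : Fin N, ∑ j, fireMap N μ w i u j
      = μ * S + (N:ℝ) * w - (μ * u i + w) := by
    intro i
    have h1 : ∀ j : Fin N, fireMap N μ w i u j
        = (μ * u j + w) - (if j = i then μ * u i + w else 0) := by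
      intro j
      by_cases h : j = i <;> simp [fireMap, h]
    simp only [h1]
    rw [Finset.sum_sub_distrib, Finset.sum_ite_eq' Finset.univ i]
    simp [Finset.sum_add_distrib, ← Finset.mul_sum, ← hS, mul_comm]
  have hE' : E - (μ + w) * ubar = -(1/(N:ℝ)^2) * (μ * T + w * S) := by
    have h2 : ∀ i : Fin N, (u i / (N:ℝ)) * ((1 / (N:ℝ)) * ∑ j, fireMap N μ w i u j)
        = (1/(N:ℝ)^2) * ((μ * S + (N:ℝ) * w - w) * u i - μ * (u i * u i)) := by
      intro i; rw [hsum i]; ring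
    rw [hE, hubar]
    simp only [h2]
    rw [← Finset.mul_sum, Finset.sum_sub_distrib, ← Finset.mul_sum, ← Finset.mul_sum,
      ← hS, ← hT]
    field_simp
    ring
  have hS0 : 0 ≤ S := Finset.sum_nonneg fun i _ => (hu i).1
  have hSN : S ≤ (N:ℝ) := by
    calc S ≤ ∑ _i : Fin N, (1:ℝ) := Finset.sum_le_sum fun i _ => (hu i).2
    _ = (N:ℝ) := by simp
  have hT0 : 0 ≤ T := Finset.sum_nonneg fun i _ => mul_nonneg (hu i).1 (hu i).1
  have hTN : T ≤ (N:ℝ) := by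
    calc T ≤ ∑ _i : Fin N, (1:ℝ) := Finset.sum_le_sum fun i _ =>
          mul_le_one₀ (hu i).2 (hu i).1 (hu i).2
    _ = (N:ℝ) := by simp
  have h1μ : 0 < 1 - μ := by linarith
  have hwμ : 1 ≤ μ + w := by
    have := (one_le_div h1μ).mp hγ; linarith
  have hbound : μ + w ≤ w / (1 - μ) := by
    rw [le_div_iff₀ h1μ]; nlinarith
  rw [hE', abs_mul, abs_neg]
  have : |1/(N:ℝ)^2| = 1/(N:ℝ)^2 := abs_of_nonneg (by positivity)
  rw [this, abs_of_nonneg (by nlinarith : (0:ℝ) ≤ μ * T + w * S)]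
  have key : 1/(N:ℝ)^2 * (μ * T + w * S) ≤ (μ + w) / (N:ℝ) := by
    rw [div_eq_mul_inv, pow_two, mul_inv, one_mul]
    have : μ * T + w * S ≤ (μ + w) * (N:ℝ) := by nlinarith
    calc ((N:ℝ)⁻¹ * (N:ℝ)⁻¹) * (μ * T + w * S)
        ≤ ((N:ℝ)⁻¹ * (N:ℝ)⁻¹) * ((μ + w) * (N:ℝ)) := by
          apply mul_le_mul_of_nonneg_left this (by positivity)
      _ = (μ + w) * (N:ℝ)⁻¹ := by field_simp
  calc 1/(N:ℝ)^2 * (μ * T + w * S) ≤ (μ + w) / (N:ℝ) := key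
    _ ≤ (w / (1 - μ)) / (N:ℝ) := by
        gcongr
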